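/- Let E be a real inner product space and κ : ℝ → ℝ a function satisfying: there exist constants 0 < α < β such that α(t − s) ≤ κ(t)t − κ(s)s ≤ β(t − s) for all 0 ≤ s ≤ t. Then for all ξ, η ∈ E, ‖κ(‖ξ‖)ξ − κ(‖η‖)η‖ ≤ β‖ξ − η‖. -/

import Mathlib

open scoped RealInnerProductSpace

private lemma kappa_key (β ar as r s c : ℝ) (hs : 0 ≤ s)
    (har : 0 ≤ ar) (has : 0 ≤ as) (hd : ar - as ≤ β * (r - s)) (hd0 : 0 ≤ ar - as)
    (hbr : ar ≤ β * r) (hbs : as ≤ β * s) (hc : -1 ≤ c) (hc1 : c ≤ 1) :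
    ar ^ 2 + as ^ 2 - 2 * ar * as * c ≤ β ^ 2 * (r ^ 2 + s ^ 2 - 2 * r * s * c) := by
  have hβs : 0 ≤ β * s := le_trans has hbs
  have hprod : ar * as ≤ (β * r) * (β * s) := mul_le_mul hbr hbs has (le_trans har hbr)
  have h1 : 0 ≤ (1 - c) * ((β * r) * (β * s) - ar * as) :=
    mul_nonneg (by linarith) (by linarith)
  have h2 : (ar - as) ^ 2 ≤ (β * (r - s)) ^ 2 := by
    have : 0 ≤ β * (r - s) := le_trans hd0 hd
    nlinarith
  nlinarith [h1, h2]

/-- Lipschitz estimate (Lemma 3.3, (3.5)):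
`‖κ(‖ξ‖)ξ - κ(‖η‖)η‖ ≤ β‖ξ - η‖`. -/
theorem kappa_lipschitz
    {E : Type*} [NormedAddCommGroup E] [InnerProductSpace ℝ E]
    (κ : ℝ → ℝ) (α β : ℝ) (hα : 0 < α) (hαβ : α < β)
    (h : ∀ s t : ℝ, 0 ≤ s → s ≤ t →
      α * (t - s) ≤ κ t * t - κ s * s ∧ κ t * t - κ s * s ≤ β * (t - s)) :
    ∀ ξ η : E, ‖κ ‖ξ‖ • ξ - κ ‖η‖ • η‖ ≤ β * ‖ξ - η‖ := by
  have hβ : 0 < β := lt_trans hα hαβ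
  -- basic facts about a t := κ t * t
  have ha0 : ∀ t : ℝ, 0 ≤ t → α * t ≤ κ t * t ∧ κ t * t ≤ β * t := by
    intro t ht
    have := h 0 t le_rfl ht
    simpa using this
  intro ξ η
  wlog hle : ‖η‖ ≤ ‖ξ‖ with H
  · have := H κ α β hα hαβ h hβ ha0 η ξ (le_of_not_ge hle)
    rwa [norm_sub_rev, norm_sub_rev η ξ] at this
  by_cases hη : η = 0
  · subst hη
    simp only [norm_zero, smul_zero, sub_zero]
    rw [norm_smul, Real.norm_eq_abs]
    have h1 := (ha0 ‖ξ‖ (norm_nonneg ξ)).1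
    have h2 := (ha0 ‖ξ‖ (norm_nonneg ξ)).2
    have hnn : 0 ≤ κ ‖ξ‖ * ‖ξ‖ := le_trans (by positivity) h1
    calc |κ ‖ξ‖| * ‖ξ‖ = |κ ‖ξ‖ * ‖ξ‖| := by rw [abs_mul, abs_of_nonneg (norm_nonneg ξ)]
      _ = κ ‖ξ‖ * ‖ξ‖ := abs_of_nonneg hnn
      _ ≤ β * ‖ξ‖ := h2
  · have hs : 0 < ‖η‖ := norm_pos_iff.mpr hη
    have hr : 0 < ‖ξ‖ := lt_of_lt_of_le hs hle
    set r := ‖ξ‖ with hrdef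
    set s := ‖η‖ with hsdef
    set p : ℝ := inner ℝ ξ η with hpdef
    have hcs : |p| ≤ r * s := abs_real_inner_le_norm ξ η
    set c := p / (r * s) with hcdef
    have hrs : (0:ℝ) < r * s := mul_pos hr hs
    have hc1 : c ≤ 1 := by
      rw [hcdef, div_le_one hrs]; exact le_trans (le_abs_self p) hcs
    have hcm1 : -1 ≤ c := by
      rw [hcdef, le_div_iff₀ hrs]
      have := neg_abs_le p
      linarith [abs_le.mp hcs]
    have hpc : p = r * s * c := by
      rw [hcdef]; field_simp
    have har := ha0 r (le_of_lt hr)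
    have has := ha0 s (le_of_lt hs)
    have hdiff := h s r (le_of_lt hs) hle
    -- squared norms
    have hL : ‖κ r • ξ - κ s • η‖ ^ 2
        = (κ r * r) ^ 2 + (κ s * s) ^ 2 - 2 * (κ r * r) * (κ s * s) * c := by
      rw [norm_sub_sq_real, real_inner_smul_left, real_inner_smul_right,
        norm_smul, norm_smul, Real.norm_eq_abs, Real.norm_eq_abs,
        mul_pow, mul_pow, sq_abs, sq_abs, ← hpdef, ← hrdef, ← hsdef, hpc]
      ring
    have hR : ‖ξ - η‖ ^ 2 = r ^ 2 + s ^ 2 - 2 * r * s * c := by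
      rw [norm_sub_sq_real, ← hpdef, ← hrdef, ← hsdef, hpc]; ring
    have key := kappa_key β (κ r * r) (κ s * s) r s c (le_of_lt hs)
      (le_trans (by positivity) har.1) (le_trans (by positivity) has.1)
      (by linarith [hdiff.2]) (le_trans (by nlinarith) hdiff.1)
      har.2 has.2 hcm1 hc1
    have hsq : ‖κ r • ξ - κ s • η‖ ^ 2 ≤ (β * ‖ξ - η‖) ^ 2 := by
      rw [hL, mul_pow β ‖ξ - η‖, hR]; exact key
    have h1 : 0 ≤ ‖κ r • ξ - κ s • η‖ := norm_nonneg _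
    have h2 : 0 ≤ β * ‖ξ - η‖ := by positivity
    nlinarith [hsq]
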